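/- With heights h_j as above and the index sequence N_{4j} = h_{2j}, N_{4j+1} = 2j·h_{2j}, N_{4j+2} = h_{2j+1}, N_{4j+3} = 2j·h_{2j+1}, the ratios N_{m+1}/N_m tend to infinity along m → ∞. -/
import Mathlib


open Filter Topology

theorem stmt_5 (h : ℕ → ℕ) (h1 : h 1 = 1)
    (hrec : ∀ j, 1 ≤ j → h (j + 1) = j * (j + 1) * h j)
    (N : ℕ → ℕ)
    (hN0 : ∀ j, N (4 * j) = h (2 * j))
    (hN1 : ∀ j, N (4 * j + 1) = 2 * j * h (2 * j))
    (hN2 : ∀ j, N (4 * j + 2) = h (2 * j + 1))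
    (hN3 : ∀ j, N (4 * j + 3) = 2 * j * h (2 * j + 1)) :
    Tendsto (fun m => (N (m + 1) : ℝ) / N m) atTop atTop := by
  -- positivity of h
  have hp : ∀ j, 1 ≤ j → 0 < h j := by
    intro j hj
    induction j, hj using Nat.le_induction with
    | base => simp [h1]
    | succ n hn ih =>
      rw [hrec n hn]
      positivity
  have key : ∀ m, 4 ≤ m → 0 < N m ∧ m * N m ≤ 2 * N (m + 1) + 3 * N m := by
    intro m hm
    obtain ⟨j, r, hr, rfl⟩ : ∃ j r, r < 4 ∧ m = 4 * j + r :=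
      ⟨m / 4, m % 4, Nat.mod_lt m (by norm_num), (Nat.div_add_mod m 4).symm⟩
    have hj1 : 1 ≤ j := by omega
    have h2j : 1 ≤ 2 * j := by omega
    have hA : 0 < h (2 * j) := hp _ (by omega)
    have hB : h (2 * j + 1) = 2 * j * (2 * j + 1) * h (2 * j) := hrec (2 * j) h2j
    have hC : h (2 * j + 2) = (2 * j + 1) * (2 * j + 2) * h (2 * j + 1) := by
      have := hrec (2 * j + 1) (by omega)
      simpa using this
    interval_cases r
    · rw [Nat.add_zero, hN0, hN1]
      exact ⟨hA, by nlinarith⟩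
    · rw [show 4 * j + 1 + 1 = 4 * j + 2 from rfl, hN1, hN2, hB]
      exact ⟨by positivity, by nlinarith⟩
    · rw [show 4 * j + 2 + 1 = 4 * j + 3 from rfl, hN2, hN3, hB]
      exact ⟨by positivity, by nlinarith⟩
    · rw [show 4 * j + 3 + 1 = 4 * (j + 1) from by ring, hN3, hN0,
        show 2 * (j + 1) = 2 * j + 2 from by ring, hC, hB]
      exact ⟨by positivity, by nlinarith⟩
  have hlow : Tendsto (fun m : ℕ => ((m : ℝ) - 3) / 2) atTop atTop := by
    apply Tendsto.atTop_div_const (by norm_num)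
    exact tendsto_atTop_add_const_right _ (-3) tendsto_natCast_atTop_atTop
  apply tendsto_atTop_mono' atTop _ hlow
  filter_upwards [eventually_ge_atTop 4] with m hm
  obtain ⟨hpos, hineq⟩ := key m hm
  have hposR : (0 : ℝ) < N m := by exact_mod_cast hpos
  rw [div_le_div_iff₀ (by norm_num) hposR]
  have : (m : ℝ) * N m ≤ 2 * N (m + 1) + 3 * N m := by exact_mod_cast hineq
  linarith
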